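/- Let F = 𝒫(𝔾) for a nonempty subset 𝔾 ⊆ G(p,V), and let 𝒫 ⊆ Sym²(V) be the positive semidefinite cone. Then F + Int 𝒫 = Int F, where Int denotes topological interior in Sym²(V). -/

import Mathlib

open Module RealInnerProductSpace Pointwise

noncomputable section

variable {V : Type*} [NormedAddCommGroup V] [InnerProductSpace ℝ V] [FiniteDimensional ℝ V]

/-- Orthogonal projection onto the subspace `W`, as an endomorphism of `V`. -/
def projCLM (W : Submodule ℝ V) : V →L[ℝ] V :=
  W.subtypeL.comp W.orthogonalProjectionOnto

/-- `tr_W A = tr (P_W ∘ A)`, the trace of the restriction of `A` to `W`. -/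
def trW (W : Submodule ℝ V) (A : V →L[ℝ] V) : ℝ :=
  LinearMap.trace ℝ V (((projCLM W).comp A : V →L[ℝ] V) : V →ₗ[ℝ] V)

/-- The subequation `𝒫(𝔾) ⊆ Sym²(V)`: self-adjoint endomorphisms `A` with
`tr_W A ≥ 0` for all `W ∈ 𝔾`. -/
def PG (𝔾 : Set (Submodule ℝ V)) : Set (selfAdjoint (V →L[ℝ] V)) :=
  {A | ∀ W ∈ 𝔾, 0 ≤ trW W (A : V →L[ℝ] V)}

/-- The positive semidefinite cone `𝒫 ⊆ Sym²(V)`. -/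
def posSA : Set (selfAdjoint (V →L[ℝ] V)) :=
  {A | ContinuousLinearMap.IsPositive (A : V →L[ℝ] V)}

/-- The identity `I` as an element of `Sym²(V)`. -/
def idSA : selfAdjoint (V →L[ℝ] V) := ⟨1, IsSelfAdjoint.one _⟩

lemma projCLM_idem (W : Submodule ℝ V) : (projCLM W).comp (projCLM W) = projCLM W := by
  ext x
  simp [projCLM, Submodule.orthogonalProjectionOnto_mem_subspace_eq_self,
    Submodule.starProjection_apply_mem, Submodule.starProjection_eq_self_iff]

lemma trace_nonneg_of_isPositive (T : V →L[ℝ] V) (hT : T.IsPositive) :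
    0 ≤ LinearMap.trace ℝ V (T : V →ₗ[ℝ] V) := by
  let b := stdOrthonormalBasis ℝ V
  rw [LinearMap.trace_eq_matrix_trace ℝ b.toBasis]
  apply Finset.sum_nonneg
  intro i _
  rw [Matrix.diag_apply, LinearMap.toMatrix_apply, b.coe_toBasis_repr_apply,
    b.repr_apply_apply, b.coe_toBasis]
  exact hT.inner_nonneg_right (b i)

lemma trW_add (W : Submodule ℝ V) (A B : V →L[ℝ] V) :
    trW W (A + B) = trW W A + trW W B := by
  unfold trW
  rw [ContinuousLinearMap.comp_add]
  push_cast
  rw [map_add]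

lemma trW_nonneg_of_isPositive (W : Submodule ℝ V) (P : V →L[ℝ] V) (hP : P.IsPositive) :
    0 ≤ trW W P := by
  set Q := projCLM W
  have hQsa : IsSelfAdjoint Q := isSelfAdjoint_starProjection W
  have key : trW W P = LinearMap.trace ℝ V ((Q.comp (P.comp Q) : V →L[ℝ] V) : V →ₗ[ℝ] V) := by
    unfold trW
    conv_lhs => rw [← projCLM_idem W]
    have h1 : (((Q.comp Q).comp P : V →L[ℝ] V) : V →ₗ[ℝ] V)
        = (Q : V →ₗ[ℝ] V) * ((Q : V →ₗ[ℝ] V) * (P : V →ₗ[ℝ] V)) := by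
      simp [ContinuousLinearMap.coe_comp, Module.End.mul_eq_comp, LinearMap.comp_assoc]
    have h2 : ((Q.comp (P.comp Q) : V →L[ℝ] V) : V →ₗ[ℝ] V)
        = ((Q : V →ₗ[ℝ] V) * (P : V →ₗ[ℝ] V)) * (Q : V →ₗ[ℝ] V) := by
      simp [ContinuousLinearMap.coe_comp, Module.End.mul_eq_comp, LinearMap.comp_assoc]
    rw [h1, h2, LinearMap.trace_mul_comm]
  rw [key]
  apply trace_nonneg_of_isPositive
  have := hP.conj_adjoint Q
  rwa [hQsa.adjoint_eq] at this

lemma smul_id_mem_interior_posSA (ε : ℝ) (hε : 0 < ε) :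
    ε • idSA ∈ interior (posSA (V := V)) := by
  rw [mem_interior_iff_mem_nhds, Metric.mem_nhds_iff]
  refine ⟨ε, hε, fun B hB => ?_⟩
  rw [Metric.mem_ball, dist_eq_norm] at hB
  have hBn : ‖(B : V →L[ℝ] V) - ε • 1‖ < ε := by
    have hc : ((B - ε • idSA : selfAdjoint (V →L[ℝ] V)) : V →L[ℝ] V)
        = (B : V →L[ℝ] V) - ε • 1 := by push_cast [idSA]; ring_nf
    calc ‖(B : V →L[ℝ] V) - ε • 1‖ = ‖B - ε • idSA‖ := by rw [← hc]; norm_cast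
    _ < ε := hB
  have hsa : IsSelfAdjoint (B : V →L[ℝ] V) := B.prop
  refine ⟨ContinuousLinearMap.isSelfAdjoint_iff_isSymmetric.mp hsa, fun x => ?_⟩
  set T : V →L[ℝ] V := (B : V →L[ℝ] V) - ε • 1 with hT
  have h1 : abs (⟪T x, x⟫) ≤ ε * (‖x‖ * ‖x‖) := by
    calc abs (⟪T x, x⟫) ≤ ‖T x‖ * ‖x‖ :=
        abs_real_inner_le_norm _ _
    _ ≤ (‖T‖ * ‖x‖) * ‖x‖ := by
        gcongr; exact ContinuousLinearMap.le_opNorm _ _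
    _ ≤ ε * (‖x‖ * ‖x‖) := by nlinarith [norm_nonneg x, hBn]
  have h2 : ⟪(B : V →L[ℝ] V) x, x⟫
      = ⟪T x, x⟫ + ε * (‖x‖ * ‖x‖) := by
    simp [hT, ContinuousLinearMap.sub_apply, inner_sub_left, real_inner_smul_left,
      real_inner_self_eq_norm_mul_norm]
    ring
  show (0:ℝ) ≤ ContinuousLinearMap.reApplyInnerSelf _ x
  simp only [ContinuousLinearMap.reApplyInnerSelf, RCLike.re_to_real]
  have := neg_abs_le (⟪T x, x⟫)
  linarith [h2, h1]

/-- `F + Int 𝒫 = Int F` for `F = 𝒫(𝔾)`. -/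
theorem statement3 (p : ℕ) (𝔾 : Set (Submodule ℝ V)) (h𝔾 : 𝔾.Nonempty)
    (hGr : ∀ W ∈ 𝔾, finrank ℝ W = p) :
    PG 𝔾 + interior (posSA (V := V)) = interior (PG 𝔾) := by
  have hsub : PG 𝔾 + posSA ⊆ PG 𝔾 := by
    rintro _ ⟨A, hA, P, hP, rfl⟩ W hW
    have hc : ((A + P : selfAdjoint (V →L[ℝ] V)) : V →L[ℝ] V)
        = (A : V →L[ℝ] V) + (P : V →L[ℝ] V) := rfl
    change 0 ≤ trW W ((A + P : selfAdjoint (V →L[ℝ] V)) : V →L[ℝ] V)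
    rw [hc, trW_add]
    exact add_nonneg (hA W hW) (trW_nonneg_of_isPositive W _ hP)
  apply Set.Subset.antisymm
  · apply interior_maximal
    · exact (Set.add_subset_add_left interior_subset).trans hsub
    · exact isOpen_interior.add_left
  · intro A hA
    rw [mem_interior_iff_mem_nhds, Metric.mem_nhds_iff] at hA
    obtain ⟨r, hr, hball⟩ := hA
    set ε := r / 2 with hε
    have hεpos : 0 < ε := by positivity
    refine Set.mem_add.mpr ⟨A - ε • idSA, ?_, ε • idSA,
      smul_id_mem_interior_posSA ε hεpos, by abel⟩
    apply hball
    rw [Metric.mem_ball, dist_eq_norm]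
    have h3 : A - ε • idSA - A = -(ε • idSA) := by abel
    rw [h3, norm_neg]
    have h4 : ‖(ε • idSA : selfAdjoint (V →L[ℝ] V))‖ ≤ ε := by
      have hc : ((ε • idSA : selfAdjoint (V →L[ℝ] V)) : V →L[ℝ] V)
          = ε • (1 : V →L[ℝ] V) := by push_cast [idSA]; ring_nf
      have : ‖(ε • idSA : selfAdjoint (V →L[ℝ] V))‖ = ‖ε • (1 : V →L[ℝ] V)‖ := by
        rw [← hc]; norm_cast
      rw [this, norm_smul ε (1 : V →L[ℝ] V), Real.norm_eq_abs, abs_of_pos hεpos]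
      have hone : ‖(1 : V →L[ℝ] V)‖ ≤ 1 := by
        rw [ContinuousLinearMap.one_def]
        exact ContinuousLinearMap.norm_id_le
      nlinarith
    exact lt_of_le_of_lt h4 (by linarith)
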